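/- Let G be a group for which every weakly bounded class in H²(G,ℤ) is bounded. Then for every finitely generated abelian group A, every weakly bounded class in H²(G,A) is bounded. -/

import Mathlib

/-- If every weakly bounded class in `H²(G,ℤ)` is bounded, then for every finitely
generated abelian coefficient group `A`, every weakly bounded class in `H²(G,A)`
is bounded. (A subset of a finitely generated abelian group is bounded iff finite.) -/
theorem stmt8 {G : Type*} [Group G]
    (hZ : ∀ ω : G → G → ℤ,
      (∀ g h k : G, ω h k - ω (g * h) k + ω g (h * k) - ω g h = 0) →
      (∀ h : G, (Set.range fun g : G => ω g h).Finite) →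
      ∃ f : G → ℤ,
        (Set.range fun p : G × G => ω p.1 p.2 + (f p.2 - f (p.1 * p.2) + f p.1)).Finite)
    (A : Type*) [AddCommGroup A] [AddGroup.FG A]
    (ω : G → G → A)
    (hcoc : ∀ g h k : G, ω h k - ω (g * h) k + ω g (h * k) - ω g h = 0)
    (hwb : ∀ h : G, (Set.range fun g : G => ω g h).Finite) :
    ∃ f : G → A,
      (Set.range fun p : G × G => ω p.1 p.2 + (f p.2 - f (p.1 * p.2) + f p.1)).Finite := by
  classical
  obtain ⟨n, ι, hι, p, hp, e, ⟨φ⟩⟩ := AddCommGroup.equiv_free_prod_directSum_zmod A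
  haveI : ∀ i, NeZero (p i ^ e i) := fun i => ⟨pow_ne_zero _ (hp i).pos.ne'⟩
  haveI : Finite (DirectSum ι fun i => ZMod (p i ^ e i)) :=
    Finite.of_injective (fun x (i : ι) => x i)
      (fun a b h => DFinsupp.ext fun i => congrFun h i)
  set ψ : Fin n → A →+ ℤ := fun i =>
    (Finsupp.applyAddHom i).comp ((AddMonoidHom.fst _ _).comp φ.toAddMonoidHom) with hψdef
  have key : ∀ i : Fin n, ∃ f : G → ℤ,
      (Set.range fun q : G × G =>
        ψ i (ω q.1 q.2) + (f q.2 - f (q.1 * q.2) + f q.1)).Finite := by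
    intro i
    refine hZ (fun g h => ψ i (ω g h)) (fun g h k => ?_) (fun h => ?_)
    · have h0 : ψ i (ω h k - ω (g * h) k + ω g (h * k) - ω g h) = ψ i 0 := by
        rw [hcoc g h k]
      simpa [map_sub, map_add] using h0
    · have hr : (Set.range fun g : G => ψ i (ω g h)) =
          ψ i '' (Set.range fun g => ω g h) := by
        rw [← Set.range_comp]; rfl
      rw [hr]
      exact (hwb h).image _
  choose F hF using key
  set f : G → A := fun g =>
    φ.symm (Finsupp.equivFunOnFinite.symm (fun i => F i g), 0) with hfdef
  refine ⟨f, ?_⟩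
  set T : Set ((Fin n →₀ ℤ) × (DirectSum ι fun i => ZMod (p i ^ e i))) :=
    {x | ∀ i, x.1 i ∈ Set.range fun q : G × G =>
      ψ i (ω q.1 q.2) + (F i q.2 - F i (q.1 * q.2) + F i q.1)} with hTdef
  have hT : T.Finite := by
    have hinj : Set.InjOn
        (fun x : (Fin n →₀ ℤ) × (DirectSum ι fun i => ZMod (p i ^ e i)) =>
          ((fun i => x.1 i, x.2) : (Fin n → ℤ) × (DirectSum ι fun i => ZMod (p i ^ e i)))) T := by
      intro a _ b _ h
      have h1 := congrArg Prod.fst h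
      have h2 := congrArg Prod.snd h
      exact Prod.ext (Finsupp.ext fun i => congrFun h1 i) h2
    have himg : (fun x : (Fin n →₀ ℤ) × (DirectSum ι fun i => ZMod (p i ^ e i)) =>
          ((fun i => x.1 i, x.2) : (Fin n → ℤ) × (DirectSum ι fun i => ZMod (p i ^ e i)))) '' T ⊆
        (Set.pi Set.univ fun i => Set.range fun q : G × G =>
          ψ i (ω q.1 q.2) + (F i q.2 - F i (q.1 * q.2) + F i q.1)) ×ˢ Set.univ := by
      rintro _ ⟨x, hx, rfl⟩
      exact ⟨fun i _ => hx i, trivial⟩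
    exact Set.Finite.of_finite_image
      (((Set.Finite.pi fun i => hF i).prod Set.finite_univ).subset himg) hinj
  have hsub : (Set.range fun q : G × G =>
      ω q.1 q.2 + (f q.2 - f (q.1 * q.2) + f q.1)) ⊆ φ.symm '' T := by
    rintro _ ⟨⟨g, h⟩, rfl⟩
    refine ⟨φ (ω g h + (f h - f (g * h) + f g)), ?_, φ.symm_apply_apply _⟩
    intro i
    refine ⟨(g, h), ?_⟩
    simp only [hfdef, map_add, map_sub, φ.apply_symm_apply, hψdef,
      AddMonoidHom.comp_apply, Finsupp.applyAddHom_apply, AddMonoidHom.coe_fst,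
      AddEquiv.coe_toAddMonoidHom, Prod.fst_add, Prod.fst_sub,
      Finsupp.add_apply, Finsupp.sub_apply, Finsupp.coe_equivFunOnFinite_symm]
  exact ((hT.image _).subset hsub).subset (by intro x hx; exact hx)
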